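/- Let r, θ be real numbers with 1 ≤ θ, θ ≤ 0.5·r, and 0.5·r ≤ 3θ. Then the cubic q(x) = 1 − (r − θ)x + (r − 2θ)x² + θx³ has a real root α with −10 < α < −1; moreover, for any such root α, the product of the other two roots, which equals −1/(θα), satisfies 0 < −1/(θα) < 1. -/
import Mathlib


/-- The cubic `q(x) = 1 - (r - θ)x + (r - 2θ)x² + θx³`. -/
def q (r θ x : ℝ) : ℝ :=
  1 - (r - θ) * x + (r - 2 * θ) * x ^ 2 + θ * x ^ 3

/-- If `1 ≤ θ ≤ 0.5r ≤ 3θ` then `q` has a real root `α` with `-10 < α < -1`;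
moreover for any such root `α`, the product of the other two roots, which
equals `-1/(θα)`, lies strictly between `0` and `1`. -/
theorem root_alpha (r θ : ℝ) (hθ1 : 1 ≤ θ) (hθ2 : θ ≤ 0.5 * r) (hθ3 : 0.5 * r ≤ 3 * θ) :
    (∃ α : ℝ, -10 < α ∧ α < -1 ∧ q r θ α = 0) ∧
    (∀ α : ℝ, -10 < α → α < -1 → q r θ α = 0 →
      0 < -1 / (θ * α) ∧ -1 / (θ * α) < 1) := by
  constructor
  · have hcont : ContinuousOn (q r θ) (Set.Icc (-10) (-1)) := by
      unfold q; fun_prop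
    have h10 : q r θ (-10) < 0 := by unfold q; nlinarith
    have h1 : 0 < q r θ (-1) := by unfold q; nlinarith
    have : Set.Ioo (q r θ (-10)) (q r θ (-1)) ⊆ q r θ '' Set.Ioo (-10) (-1) :=
      intermediate_value_Ioo (by norm_num) hcont
    obtain ⟨α, hα, hq⟩ := this ⟨h10, h1⟩
    exact ⟨α, hα.1, hα.2, hq⟩
  · intro α h1 h2 _
    have hθα : θ * α < -1 := by nlinarith
    have h0 : (0:ℝ) < -(θ * α) := by linarith
    have e : -1 / (θ * α) = 1 / (-(θ * α)) := by rw [neg_div, ← div_neg]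
    rw [e]
    exact ⟨div_pos one_pos h0, (div_lt_one h0).mpr (by linarith)⟩
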